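/- Let 1 ≤ q < ∞ and −1/q ≤ λ < 0, and let f belong to the p-adic central Morrey space Ḃ^{q,λ}(Q_p^n). Then for every x ∈ Q_p^n \ {0}, the p-adic Hardy operator satisfies |H^p f(x)| ≤ |x|_p^{nλ} ‖f‖_{Ḃ^{q,λ}(Q_p^n)}. -/

import Mathlib

open MeasureTheory Metric Set
open scoped ENNReal NNReal

noncomputable instance (p : ℕ) [Fact p.Prime] : MeasurableSpace ℚ_[p] := borel _
instance (p : ℕ) [Fact p.Prime] : BorelSpace ℚ_[p] := ⟨rfl⟩

/-- The closed unit ball of `ℚ_[p]^n` (with the sup norm) as a positive compact set. -/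
noncomputable def unitBall (p : ℕ) [Fact p.Prime] (n : ℕ) :
    TopologicalSpace.PositiveCompacts (Fin n → ℚ_[p]) :=
  ⟨⟨closedBall 0 1, isCompact_closedBall 0 1⟩,
    ⟨0, ball_subset_interior_closedBall (mem_ball_self one_pos)⟩⟩

/-- The Haar measure on `ℚ_[p]^n`, normalized so that the unit ball has measure `1`. -/
noncomputable def μp (p : ℕ) [Fact p.Prime] (n : ℕ) : Measure (Fin n → ℚ_[p]) :=
  Measure.addHaarMeasure (unitBall p n)

section Aux

variable {p : ℕ} [Fact p.Prime] {n : ℕ}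

instance : (μp p n).IsAddHaarMeasure := Measure.isAddHaarMeasure_addHaarMeasure _

lemma Bmeas (r : ℝ) : MeasurableSet {y : Fin n → ℚ_[p] | ‖y‖ ≤ r} :=
  (isClosed_le (continuous_norm) continuous_const).measurableSet

lemma approx (z : ℚ_[p]) (hz : ‖z‖ ≤ 1) : ∃ k : ℕ, k < p ∧ ‖z - k‖ ≤ (p:ℝ)⁻¹ := by
  obtain ⟨k, hk, hmem⟩ := PadicInt.exists_mem_range (⟨z, hz⟩ : ℤ_[p])
  refine ⟨k, hk, ?_⟩
  rw [PadicInt.maximalIdeal_eq_span_p, Ideal.mem_span_singleton,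
    ← PadicInt.norm_lt_one_iff_dvd] at hmem
  have h2 : ‖z - (k:ℚ_[p])‖ < 1 := by
    rw [PadicInt.norm_def] at hmem; push_cast at hmem; exact hmem
  have := (Padic.norm_le_pow_iff_norm_lt_pow_add_one (z - (k:ℚ_[p])) (-1)).2 (by simpa using h2)
  simpa [zpow_neg_one] using this

lemma hp1 : (1:ℝ) < (p:ℝ) := by exact_mod_cast (Fact.out : p.Prime).one_lt
lemma hp0 : (0:ℝ) < (p:ℝ) := lt_trans one_pos hp1

lemma mu_step (a : ℤ) :
    μp p n {y : Fin n → ℚ_[p] | ‖y‖ ≤ (p:ℝ)^(a+1)} =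
      (p:ℝ≥0∞)^n * μp p n {y : Fin n → ℚ_[p] | ‖y‖ ≤ (p:ℝ)^a} := by
  have hple : (0:ℝ) < p := hp0
  set B : Set (Fin n → ℚ_[p]) := {y | ‖y‖ ≤ (p:ℝ)^a} with hB
  set rep : (Fin n → Fin p) → (Fin n → ℚ_[p]) :=
    fun v i => ((v i : ℕ) : ℚ_[p]) * (p:ℚ_[p])^(-(a+1)) with hrep
  have hppow : ‖(p:ℚ_[p])^(-(a+1))‖ = (p:ℝ)^(a+1) := by
    rw [Padic.norm_p_zpow]; ring_nf
  have hrepnorm : ∀ (v : Fin n → Fin p) (i : Fin n), ‖rep v i‖ ≤ (p:ℝ)^(a+1) := by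
    intro v i
    rw [hrep]
    simp only [norm_mul, hppow]
    calc ‖((v i : ℕ) : ℚ_[p])‖ * (p:ℝ)^(a+1) ≤ 1 * (p:ℝ)^(a+1) := by
          apply mul_le_mul_of_nonneg_right _ (le_of_lt (zpow_pos hple _))
          exact_mod_cast Padic.norm_int_le_one ((v i : ℕ) : ℤ)
      _ = (p:ℝ)^(a+1) := one_mul _
  have hunion : {y : Fin n → ℚ_[p] | ‖y‖ ≤ (p:ℝ)^(a+1)} =
      ⋃ v : Fin n → Fin p, (fun y => y - rep v) ⁻¹' B := by
    ext y
    simp only [mem_setOf_eq, mem_iUnion, mem_preimage, hB]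
    constructor
    · intro hy
      have hyi : ∀ i, ‖y i‖ ≤ (p:ℝ)^(a+1) := by
        intro i
        exact le_trans (norm_le_pi_norm y i) hy
      have hz : ∀ i, ‖(p:ℚ_[p])^(a+1) * y i‖ ≤ 1 := by
        intro i
        rw [norm_mul, Padic.norm_p_zpow]
        calc (p:ℝ)^(-(a+1)) * ‖y i‖ ≤ (p:ℝ)^(-(a+1)) * (p:ℝ)^(a+1) :=
              mul_le_mul_of_nonneg_left (hyi i) (le_of_lt (zpow_pos hple _))
          _ = 1 := by rw [← zpow_add₀ (ne_of_gt hple), show (-(a+1)) + (a+1) = 0 by ring, zpow_zero]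
      choose k hk1 hk2 using fun i => approx ((p:ℚ_[p])^(a+1) * y i) (hz i)
      refine ⟨fun i => ⟨k i, hk1 i⟩, ?_⟩
      have : ∀ i, ‖y i - rep (fun i => ⟨k i, hk1 i⟩) i‖ ≤ (p:ℝ)^a := by
        intro i
        have hne0 : ((p:ℚ_[p])) ≠ 0 := by
          exact_mod_cast (Fact.out : p.Prime).ne_zero
        have hcancel : (p:ℚ_[p])^(-(a+1)) * (p:ℚ_[p])^(a+1) = 1 := by
          rw [← zpow_add₀ hne0, show (-(a+1)) + (a+1) = 0 by ring, zpow_zero]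
        have heq : y i - rep (fun i => ⟨k i, hk1 i⟩) i =
            (p:ℚ_[p])^(-(a+1)) * ((p:ℚ_[p])^(a+1) * y i - (k i : ℚ_[p])) := by
          simp only [hrep]
          rw [mul_sub, ← mul_assoc, hcancel, one_mul]
          ring
        rw [heq, norm_mul, hppow]
        calc (p:ℝ)^(a+1) * ‖(p:ℚ_[p])^(a+1) * y i - (k i : ℚ_[p])‖
            ≤ (p:ℝ)^(a+1) * (p:ℝ)⁻¹ :=
              mul_le_mul_of_nonneg_left (hk2 i) (le_of_lt (zpow_pos hple _))
          _ = (p:ℝ)^a := by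
              rw [← zpow_neg_one, ← zpow_add₀ (ne_of_gt hple)]; ring_nf
      exact pi_norm_le_iff_of_nonneg (le_of_lt (zpow_pos hple _)) |>.2
        (by simpa [Pi.sub_apply] using this)
    · rintro ⟨v, hv⟩
      have hvi : ∀ i, ‖y i - rep v i‖ ≤ (p:ℝ)^a := by
        intro i
        exact le_trans (by simpa using norm_le_pi_norm (y - rep v) i) hv
      have : ∀ i, ‖y i‖ ≤ (p:ℝ)^(a+1) := by
        intro i
        have : y i = (y i - rep v i) + rep v i := by ring
        rw [this]
        refine le_trans (Padic.nonarchimedean _ _) (max_le ?_ (hrepnorm v i))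
        exact le_trans (hvi i) (zpow_le_zpow_right₀ (le_of_lt hp1) (by omega))
      exact pi_norm_le_iff_of_nonneg (le_of_lt (zpow_pos hple _)) |>.2 this
  have hdisj : Pairwise (Function.onFun Disjoint
      fun v : Fin n → Fin p => (fun y => y - rep v) ⁻¹' B) := by
    intro v v' hvv'
    rw [Function.onFun]
    rw [Set.disjoint_left]
    intro y hy hy'
    have : ∃ i, v i ≠ v' i := by
      by_contra h
      push_neg at h
      exact hvv' (funext h)
    obtain ⟨i, hi⟩ := this
    have h1 : ‖y i - rep v i‖ ≤ (p:ℝ)^a :=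
      le_trans (by simpa using norm_le_pi_norm (y - rep v) i) hy
    have h2 : ‖y i - rep v' i‖ ≤ (p:ℝ)^a :=
      le_trans (by simpa using norm_le_pi_norm (y - rep v') i) hy'
    have h3 : ‖rep v i - rep v' i‖ ≤ (p:ℝ)^a := by
      have : rep v i - rep v' i = (y i - rep v' i) - (y i - rep v i) := by ring
      rw [this]
      rw [sub_eq_add_neg]
      refine le_trans (Padic.nonarchimedean _ _) (max_le h2 ?_)
      rw [norm_neg]; exact h1
    have hd : rep v i - rep v' i =
        (((v i : ℕ) : ℤ) - ((v' i : ℕ) : ℤ) : ℤ) * (p:ℚ_[p])^(-(a+1)) := by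
      rw [hrep]; push_cast; ring
    have hdvd : ¬ ((p:ℤ) ∣ (((v i : ℕ) : ℤ) - ((v' i : ℕ) : ℤ))) := by
      intro hdvd
      have hne : (((v i : ℕ) : ℤ) - ((v' i : ℕ) : ℤ)) ≠ 0 := by
        simp only [ne_eq, sub_eq_zero]
        intro h
        exact hi (Fin.ext (by exact_mod_cast h))
      have hle := Int.le_of_dvd (abs_pos.mpr hne) ((dvd_abs _ _).mpr hdvd)
      have b1 : ((v i : ℕ) : ℤ) < p := by exact_mod_cast (v i).2
      have b2 : ((v' i : ℕ) : ℤ) < p := by exact_mod_cast (v' i).2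
      have b3 : (0:ℤ) ≤ ((v i : ℕ) : ℤ) := Int.natCast_nonneg _
      have b4 : (0:ℤ) ≤ ((v' i : ℕ) : ℤ) := Int.natCast_nonneg _
      have b5 : |(((v i : ℕ) : ℤ) - ((v' i : ℕ) : ℤ))| < p := abs_lt.mpr ⟨by omega, by omega⟩
      exact absurd hle (not_le.mpr b5)
    have hnorm1 : ‖((((v i : ℕ) : ℤ) - ((v' i : ℕ) : ℤ) : ℤ) : ℚ_[p])‖ = 1 := by
      rcases lt_or_eq_of_le (Padic.norm_int_le_one (p:=p) (((v i : ℕ) : ℤ) - ((v' i : ℕ) : ℤ))) with h | h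
      · exact absurd ((Padic.norm_intCast_lt_one_iff (p:=p)).1 h) hdvd
      · exact h
    rw [hd, norm_mul, hnorm1, one_mul, hppow] at h3
    exact absurd h3 (not_le.mpr (zpow_lt_zpow_right₀ hp1 (by omega)))
  have hmeas : ∀ v : Fin n → Fin p, MeasurableSet ((fun y => y - rep v) ⁻¹' B) := by
    intro v
    exact (Bmeas (p:=p) (n:=n) ((p:ℝ)^a)).preimage (measurable_id.sub_const _)
  rw [hunion, measure_iUnion hdisj hmeas]
  have hfib : ∀ v : Fin n → Fin p, μp p n ((fun y => y - rep v) ⁻¹' B) = μp p n B := by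
    intro v
    have : (fun y : Fin n → ℚ_[p] => y - rep v) = (fun y => -rep v + y) := by
      funext y; ring
    rw [this, measure_preimage_add]
  rw [tsum_congr hfib, tsum_fintype]
  simp only [Finset.sum_const, Finset.card_univ, Fintype.card_fun, Fintype.card_fin, nsmul_eq_mul]
  push_cast
  ring

lemma mu_ball (γ : ℤ) :
    μp p n {y : Fin n → ℚ_[p] | ‖y‖ ≤ (p:ℝ)^γ} = (p:ℝ≥0∞) ^ ((n:ℝ) * (γ:ℝ)) := by
  have hP0 : (p:ℝ≥0∞) ≠ 0 := by
    exact_mod_cast (Nat.cast_ne_zero (R := ℝ≥0∞)).mpr (Fact.out : p.Prime).ne_zero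
  have hPt : (p:ℝ≥0∞) ≠ ⊤ := ENNReal.natCast_ne_top p
  induction γ using Int.induction_on with
  | zero =>
      have hset : {y : Fin n → ℚ_[p] | ‖y‖ ≤ (p:ℝ)^(0:ℤ)} = closedBall 0 1 := by
        ext y; simp [mem_closedBall, dist_zero_right]
      rw [hset]
      simp only [Int.cast_zero, mul_zero, ENNReal.rpow_zero]
      exact Measure.addHaarMeasure_self
  | succ k ih =>
      rw [mu_step, ih, ← ENNReal.rpow_natCast (p:ℝ≥0∞) n, ← ENNReal.rpow_add _ _ hP0 hPt]
      congr 1; push_cast; ring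
  | pred k ih =>
      have h := mu_step (p:=p) (n:=n) (-(k:ℤ)-1)
      rw [show (-(k:ℤ)-1+1) = -(k:ℤ) by ring, ih,
        ← ENNReal.rpow_natCast (p:ℝ≥0∞) n] at h
      have expand : μp p n {y : Fin n → ℚ_[p] | ‖y‖ ≤ (p:ℝ)^(-(k:ℤ)-1)} =
          (p:ℝ≥0∞)^(-(n:ℝ)) * ((p:ℝ≥0∞)^((n:ℕ):ℝ) *
            μp p n {y : Fin n → ℚ_[p] | ‖y‖ ≤ (p:ℝ)^(-(k:ℤ)-1)}) := by
        rw [← mul_assoc, ← ENNReal.rpow_add _ _ hP0 hPt]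
        norm_num
      rw [expand, ← h, ← ENNReal.rpow_add _ _ hP0 hPt]
      congr 1; push_cast; ring

lemma norm_exists (hn : 0 < n) (x : Fin n → ℚ_[p]) (hx : x ≠ 0) :
    ∃ γ : ℤ, ‖x‖ = (p:ℝ)^γ := by
  haveI : Nonempty (Fin n) := ⟨⟨0, hn⟩⟩
  obtain ⟨i, -, hi⟩ := Finset.exists_mem_eq_sup (Finset.univ : Finset (Fin n))
    Finset.univ_nonempty (fun i => ‖x i‖₊)
  have hnorm : ‖x‖ = ‖x i‖ := by
    rw [Pi.norm_def, hi]; rfl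
  have hxi : x i ≠ 0 := by
    intro h
    exact hx (norm_eq_zero.mp (by rw [hnorm, h, norm_zero]))
  exact ⟨-(x i).valuation, by rw [hnorm, Padic.norm_eq_zpow_neg_valuation hxi]⟩

end Aux

/-- The `p`-adic fractional Hardy operator
`H^p_α f(x) = |x|_p^{-(n-α)} ∫_{|y|_p ≤ |x|_p} f(y) dy` (real powers). -/
noncomputable def Hop (p : ℕ) [Fact p.Prime] (n : ℕ) (α : ℝ)
    (f : (Fin n → ℚ_[p]) → ℝ) (x : Fin n → ℚ_[p]) : ℝ :=
  ‖x‖ ^ (α - (n : ℝ)) * ∫ y in {y : Fin n → ℚ_[p] | ‖y‖ ≤ ‖x‖}, f y ∂(μp p n)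

/-- The indicator function of the unit ball of `ℚ_[p]^n`. -/
noncomputable def f₀ (p : ℕ) [Fact p.Prime] (n : ℕ) : (Fin n → ℚ_[p]) → ℝ :=
  Set.indicator {y : Fin n → ℚ_[p] | ‖y‖ ≤ 1} (fun _ => (1 : ℝ))

/-- The `p`-adic central Morrey norm `‖f‖_{Ḃ^{q,l}}`. -/
noncomputable def morrey (p : ℕ) [Fact p.Prime] (n : ℕ) (q l : ℝ)
    (f : (Fin n → ℚ_[p]) → ℝ) : ℝ≥0∞ :=
  ⨆ γ : ℤ, (ENNReal.ofReal (((p : ℝ) ^ ((n : ℝ) * (γ : ℝ))) ^ (-(1 + l * q))) *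
    ∫⁻ x in {x : Fin n → ℚ_[p] | ‖x‖ ≤ (p : ℝ) ^ γ},
      ENNReal.ofReal (|f x| ^ q) ∂(μp p n)) ^ (1 / q)

/-- The weak `p`-adic central Morrey norm `‖g‖_{WḂ^{q,l}}`. -/
noncomputable def wmorrey (p : ℕ) [Fact p.Prime] (n : ℕ) (q l : ℝ)
    (g : (Fin n → ℚ_[p]) → ℝ) : ℝ≥0∞ :=
  ⨆ γ : ℤ, ENNReal.ofReal (((p : ℝ) ^ ((n : ℝ) * (γ : ℝ))) ^ (-(l + 1 / q))) *
    ⨆ (t : ℝ) (_ : 0 < t), ENNReal.ofReal t *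
      (μp p n {x : Fin n → ℚ_[p] | ‖x‖ ≤ (p : ℝ) ^ γ ∧ t < |g x|}) ^ (1 / q)

/-- Pointwise Hölder bound for the `p`-adic Hardy operator on the central Morrey
space: `|H^p f(x)| ≤ |x|_p^{nλ} ‖f‖_{Ḃ^{q,λ}}` for `x ≠ 0`. -/
theorem hardy_morrey_pointwise (p : ℕ) [Fact p.Prime] (n : ℕ) (hn : 0 < n)
    (q l : ℝ) (hq : 1 ≤ q) (hl1 : -(1 / q) ≤ l) (hl2 : l < 0)
    (f : (Fin n → ℚ_[p]) → ℝ) (hf : AEStronglyMeasurable f (μp p n))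
    (hfB : morrey p n q l f ≠ ⊤)
    (x : Fin n → ℚ_[p]) (hx : x ≠ 0) :
    ENNReal.ofReal |Hop p n 0 f x| ≤
      ENNReal.ofReal (‖x‖ ^ ((n : ℝ) * l)) * morrey p n q l f := by
  have hq0 : (0:ℝ) < q := lt_of_lt_of_le one_pos hq
  have hple : (0:ℝ) < (p:ℝ) := hp0
  obtain ⟨γ, hγ⟩ := norm_exists hn x hx
  set rp : ℝ := (p:ℝ) with hrp
  set μ := μp p n with hμ
  set B : Set (Fin n → ℚ_[p]) := {y | ‖y‖ ≤ rp^γ} with hBdef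
  have hμB : μ B = (p:ℝ≥0∞) ^ ((n:ℝ) * (γ:ℝ)) := mu_ball γ
  set c : ℝ≥0∞ := ENNReal.ofReal ((rp ^ ((n:ℝ)*(γ:ℝ))) ^ (-(1+l*q))) with hc
  set I : ℝ≥0∞ := ∫⁻ y in B, ENNReal.ofReal (|f y|^q) ∂μ with hI
  have hM : (c * I)^(1/q) ≤ morrey p n q l f :=
    le_iSup (fun γ : ℤ => (ENNReal.ofReal (((p:ℝ)^((n:ℝ)*(γ:ℝ)))^(-(1+l*q))) *
      ∫⁻ x in {x : Fin n → ℚ_[p] | ‖x‖ ≤ (p:ℝ)^γ},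
        ENNReal.ofReal (|f x|^q) ∂(μp p n))^(1/q)) γ
  -- Hölder
  have e1 : eLpNorm' f 1 (μ.restrict B) = ∫⁻ y in B, (‖f y‖₊ : ℝ≥0∞) ∂μ := by
    simp [eLpNorm']; rfl
  have e2 : eLpNorm' f q (μ.restrict B) = I^(1/q) := by
    rw [eLpNorm', hI]
    congr 1
    refine lintegral_congr fun y => ?_
    rw [Real.enorm_eq_ofReal_abs, ENNReal.ofReal_rpow_of_nonneg (abs_nonneg _) hq0.le]
  have hHolder : (∫⁻ y in B, (‖f y‖₊ : ℝ≥0∞) ∂μ) ≤ I^(1/q) * (μ B)^(1 - 1/q) := by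
    have h3 := eLpNorm'_le_eLpNorm'_mul_rpow_measure_univ (p:=1) (q:=q) one_pos hq
      (hf.restrict (s := B))
    rw [e1, e2, Measure.restrict_apply_univ] at h3
    simpa using h3
  have hIntBound : ENNReal.ofReal |∫ y in B, f y ∂μ| ≤ I^(1/q) * (μ B)^(1 - 1/q) := by
    refine le_trans ?_ hHolder
    rw [← Real.norm_eq_abs, ofReal_norm_eq_enorm]
    exact enorm_integral_le_lintegral_enorm _
  have hc0 : c ≠ 0 := by
    rw [hc]
    exact (ENNReal.ofReal_pos.mpr (Real.rpow_pos_of_pos (Real.rpow_pos_of_pos hple _) _)).ne'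
  have hct : c ≠ ⊤ := ENNReal.ofReal_ne_top
  have hIq : I^(1/q) ≤ c⁻¹^(1/q) * morrey p n q l f := by
    have heq : I^(1/q) = c⁻¹^(1/q) * (c*I)^(1/q) := by
      rw [← ENNReal.mul_rpow_of_nonneg _ _ (by positivity : (0:ℝ) ≤ 1/q), ← mul_assoc,
        ENNReal.inv_mul_cancel hc0 hct, one_mul]
    rw [heq]
    exact mul_le_mul_right hM _
  have hHop : |Hop p n 0 f x| = ‖x‖^((0:ℝ)-(n:ℝ)) * |∫ y in B, f y ∂μ| := by
    rw [Hop, abs_mul, abs_of_nonneg (Real.rpow_nonneg (norm_nonneg _) _), hγ]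
  -- coefficient computation helpers
  have key : ∀ s t : ℝ, ENNReal.ofReal (rp^s) * ENNReal.ofReal (rp^t)
      = ENNReal.ofReal (rp^(s+t)) := fun s t => by
    rw [← ENNReal.ofReal_mul (Real.rpow_nonneg hple.le _), ← Real.rpow_add hple]
  have key2 : ∀ s t : ℝ, (ENNReal.ofReal (rp^s))^t = ENNReal.ofReal (rp^(s*t)) := fun s t => by
    rw [ENNReal.ofReal_rpow_of_pos (Real.rpow_pos_of_pos hple _), ← Real.rpow_mul hple.le]
  have keyinv : ∀ s : ℝ, (ENNReal.ofReal (rp^s))⁻¹ = ENNReal.ofReal (rp^(-s)) := fun s => by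
    rw [← ENNReal.ofReal_inv_of_pos (Real.rpow_pos_of_pos hple _), ← Real.rpow_neg hple.le]
  have f1 : ∀ t : ℝ, ENNReal.ofReal (‖x‖^t) = ENNReal.ofReal (rp^((γ:ℝ)*t)) := fun t => by
    rw [hγ, ← Real.rpow_intCast rp γ, ← Real.rpow_mul hple.le]
  have f2 : c = ENNReal.ofReal (rp^(((n:ℝ)*(γ:ℝ))*(-(1+l*q)))) := by
    rw [hc, ← Real.rpow_mul hple.le]
  have f3 : μ B = ENNReal.ofReal (rp^((n:ℝ)*(γ:ℝ))) := by
    rw [hμB, show ((p:ℕ):ℝ≥0∞) = ENNReal.ofReal rp from (ENNReal.ofReal_natCast p).symm,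
      ENNReal.ofReal_rpow_of_pos hple]
  calc ENNReal.ofReal |Hop p n 0 f x|
      = ENNReal.ofReal (‖x‖^((0:ℝ)-(n:ℝ))) * ENNReal.ofReal |∫ y in B, f y ∂μ| := by
        rw [hHop, ENNReal.ofReal_mul (Real.rpow_nonneg (norm_nonneg _) _)]
    _ ≤ ENNReal.ofReal (‖x‖^((0:ℝ)-(n:ℝ))) * (I^(1/q) * (μ B)^(1-1/q)) :=
        mul_le_mul_right hIntBound _
    _ ≤ ENNReal.ofReal (‖x‖^((0:ℝ)-(n:ℝ))) * ((c⁻¹^(1/q) * morrey p n q l f) * (μ B)^(1-1/q)) :=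
        mul_le_mul_right (mul_le_mul_left hIq _) _
    _ = (ENNReal.ofReal (‖x‖^((0:ℝ)-(n:ℝ))) * c⁻¹^(1/q) * (μ B)^(1-1/q)) * morrey p n q l f := by
        ring
    _ = ENNReal.ofReal (‖x‖ ^ ((n : ℝ) * l)) * morrey p n q l f := by
        congr 1
        rw [f1, f2, f3, keyinv, key2, key2, key, key, f1]
        congr 2
        field_simp
        ring
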